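/- Let u ∈ R^∞_+ be a decreasing sequence that is both α-moderate and β-moderate from n_0 onwards, suppose ‖w_k − w*‖ ≤ u_k for all n_0 ≤ k ≤ n, and assume ‖L^{(θ)}_n‖·1[n ≥ n_0+1] ≤ ε^{(θ)}_{n−1}. Then for n ≥ n_0: ‖θ_n − θ*‖ ≤ C_a [‖θ_{n_0} − θ*‖ + (α_{n_0}/β_{n_0})‖w_{n_0} − w*‖] e^{−q_1 Σ_{j=n_0+1}^{n−1} α_j} + C_b (α_{n−1}/β_{n−1}) u_{n−1} + ε^{(θ)}_{n−1}, where C_a = C_θ max{‖W_1W_2^{-1}‖, 1} and C_b = ‖W_1W_2^{-1}‖(1 + (2e^{q_1/2}/q_1) C_U C_θ), with C_U = ‖X_1‖ + 2(α−β)(1+‖X_1‖) and C_θ the explicit constant from ∏_{k=i}^n ‖I − α_k X_1‖ ≤ C_θ e^{−q_1 Σ_{k=i}^n α_k}. -/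

import Mathlib

open Matrix
open scoped RealInnerProductSpace BigOperators

noncomputable section

abbrev E (d : ℕ) := EuclideanSpace ℝ (Fin d)

variable {d : ℕ}

def app (A : Matrix (Fin d) (Fin d) ℝ) (x : E d) : E d :=
  Matrix.toEuclideanCLM (𝕜 := ℝ) A x

def opNorm (A : Matrix (Fin d) (Fin d) ℝ) : ℝ :=
  ‖Matrix.toEuclideanCLM (𝕜 := ℝ) A‖

/-- Positive definiteness (not necessarily symmetric). -/
def PosDefNS (A : Matrix (Fin d) (Fin d) ℝ) : Prop :=
  ∀ x : E d, x ≠ 0 → 0 < ⟪x, app A x⟫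

def lambdaMin (A : Matrix (Fin d) (Fin d) ℝ) : ℝ :=
  ⨅ x : Metric.sphere (0 : E d) 1, ⟪(x : E d), app A (x : E d)⟫

def steps (a : ℝ) (n : ℕ) : ℝ := ((n : ℝ) + 1) ^ (-a)

/-- The matrix product `∏_{j=a}^{b} (I − c_j X)` (equal to `1` if `b < a`). -/
def Mprod (X : Matrix (Fin d) (Fin d) ℝ) (c : ℕ → ℝ) (a b : ℕ) :
    Matrix (Fin d) (Fin d) ℝ :=
  ((List.range' a (b + 1 - a)).map fun j => (1 : Matrix (Fin d) (Fin d) ℝ) - c j • X).prod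

def AlphaModerateFrom (α β q1 : ℝ) (u : ℕ → ℝ) (k0 : ℕ) : Prop :=
  ∀ k : ℕ, k0 ≤ k →
    u k / u (k + 1) ≤
      (steps α (k + 1) / steps α k) * (steps β k / steps β (k + 1)) *
        Real.exp (q1 / 2 * steps α (k + 1))

def BetaModerateFrom (α β q2 : ℝ) (u : ℕ → ℝ) (k0 : ℕ) : Prop :=
  ∀ k : ℕ, k0 ≤ k →
    u k / u (k + 1) ≤
      (steps α (k + 1) / steps α k) * (steps β k / steps β (k + 1)) *
        Real.exp (q2 / 2 * steps β (k + 2))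

/-- The aggregated noise `L^{(θ)}_{n+1}` (as a function of `n₀` and `n`). -/
def Lth (Γ1 Γ2 W1 W2 : Matrix (Fin d) (Fin d) ℝ) (α : ℝ) (M1 M2 : ℕ → E d)
    (n0 n : ℕ) : E d :=
  ∑ k ∈ Finset.Icc n0 n,
    steps α k • app (Mprod (Γ1 - W1 * W2⁻¹ * Γ2) (steps α) (k + 1) n)
      (M1 (k + 1) - app (W1 * W2⁻¹) (M2 (k + 1)))

section AuxLemmas

variable {d : ℕ}

-- basics about app / opNorm
lemma app_add (A : Matrix (Fin d) (Fin d) ℝ) (x y : E d) : app A (x + y) = app A x + app A y :=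
  map_add _ _ _

lemma app_sub' (A : Matrix (Fin d) (Fin d) ℝ) (x y : E d) : app A (x - y) = app A x - app A y :=
  map_sub _ _ _

lemma app_smul' (A : Matrix (Fin d) (Fin d) ℝ) (r : ℝ) (x : E d) : app A (r • x) = r • app A x :=
  map_smul _ _ _

lemma sub_app (A B : Matrix (Fin d) (Fin d) ℝ) (x : E d) : app (A - B) x = app A x - app B x := by
  unfold app; rw [map_sub]; rfl

lemma add_app (A B : Matrix (Fin d) (Fin d) ℝ) (x : E d) : app (A + B) x = app A x + app B x := by
  unfold app; rw [map_add]; rfl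

lemma smul_app (A : Matrix (Fin d) (Fin d) ℝ) (r : ℝ) (x : E d) : app (r • A) x = r • app A x := by
  unfold app; rw [_root_.map_smul]; rfl

lemma app_one (x : E d) : app (1 : Matrix (Fin d) (Fin d) ℝ) x = x := by
  unfold app; rw [_root_.map_one]; rfl

lemma app_mul (A B : Matrix (Fin d) (Fin d) ℝ) (x : E d) : app (A * B) x = app A (app B x) := by
  unfold app; rw [_root_.map_mul]; rfl

lemma app_sum (M : Matrix (Fin d) (Fin d) ℝ) {ι : Type*} (s : Finset ι) (f : ι → E d) :
    app M (∑ i ∈ s, f i) = ∑ i ∈ s, app M (f i) := map_sum _ _ _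

lemma norm_app_le (A : Matrix (Fin d) (Fin d) ℝ) (x : E d) : ‖app A x‖ ≤ opNorm A * ‖x‖ :=
  ContinuousLinearMap.le_opNorm _ x

lemma opNorm_nonneg (A : Matrix (Fin d) (Fin d) ℝ) : 0 ≤ opNorm A := norm_nonneg _

lemma opNorm_mul_le (A B : Matrix (Fin d) (Fin d) ℝ) : opNorm (A * B) ≤ opNorm A * opNorm B := by
  unfold opNorm; rw [_root_.map_mul]; exact norm_mul_le _ _

lemma opNorm_one (hd : 0 < d) : opNorm (1 : Matrix (Fin d) (Fin d) ℝ) = 1 := by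
  haveI : Nonempty (Fin d) := ⟨⟨0, hd⟩⟩
  unfold opNorm; rw [_root_.map_one]; exact norm_one

-- Mprod lemmas
lemma Mprod_empty (X : Matrix (Fin d) (Fin d) ℝ) (c : ℕ → ℝ) {a b : ℕ} (h : b < a) :
    Mprod X c a b = 1 := by
  unfold Mprod
  have : b + 1 - a = 0 := by omega
  rw [this]; simp

lemma Mprod_succ_top (X : Matrix (Fin d) (Fin d) ℝ) (c : ℕ → ℝ) {a b : ℕ} (h : a ≤ b + 1) :
    Mprod X c a (b + 1) = Mprod X c a b * (1 - c (b + 1) • X) := by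
  unfold Mprod
  have h1 : b + 1 + 1 - a = (b + 1 - a) + 1 := by omega
  have h2 : a + (b + 1 - a) = b + 1 := by omega
  rw [h1, List.range'_1_concat, List.map_append, List.prod_append, h2]
  simp

lemma Mprod_cons (X : Matrix (Fin d) (Fin d) ℝ) (c : ℕ → ℝ) {a b : ℕ} (h : a ≤ b) :
    Mprod X c a b = (1 - c a • X) * Mprod X c (a + 1) b := by
  unfold Mprod
  have h1 : b + 1 - a = (b + 1 - (a + 1)) + 1 := by omega
  rw [h1, List.range'_succ]
  simp

lemma Commute_Mprod (X : Matrix (Fin d) (Fin d) ℝ) (c : ℕ → ℝ) (s : ℝ) (a b : ℕ) :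
    Commute ((1 : Matrix (Fin d) (Fin d) ℝ) - s • X) (Mprod X c a b) := by
  apply Commute.list_prod_right
  intro B hB
  simp only [List.mem_map] at hB
  obtain ⟨j, _, rfl⟩ := hB
  have hXX : Commute X X := Commute.refl X
  have h1 : Commute ((1 : Matrix (Fin d) (Fin d) ℝ) - s • X) X := by
    exact ((Commute.one_left X).sub_left (hXX.smul_left s))
  exact ((Commute.one_right _).sub_right (h1.smul_right (c j)))

lemma Mprod_mul_left (X : Matrix (Fin d) (Fin d) ℝ) (c : ℕ → ℝ) {a b : ℕ} (h : a ≤ b + 1) :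
    (1 - c (b + 1) • X) * Mprod X c a b = Mprod X c a (b + 1) := by
  rw [Mprod_succ_top X c h, (Commute_Mprod X c (c (b+1)) a b).eq]

lemma opNorm_Mprod_le (hd : 0 < d) (X : Matrix (Fin d) (Fin d) ℝ) (c : ℕ → ℝ) (a b : ℕ) :
    opNorm (Mprod X c a b) ≤ ∏ k ∈ Finset.Icc a b, opNorm (1 - c k • X) := by
  induction b with
  | zero =>
    rcases Nat.eq_zero_or_pos a with rfl | ha
    · have : Mprod X c 0 0 = 1 - c 0 • X := by
        unfold Mprod; simp
      rw [this]; simp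
    · rw [Mprod_empty X c ha, Finset.Icc_eq_empty (by omega), opNorm_one hd, Finset.prod_empty]
  | succ b ih =>
    by_cases h : a ≤ b + 1
    · rw [Mprod_succ_top X c h, Finset.prod_Icc_succ_top h]
      calc opNorm (Mprod X c a b * (1 - c (b+1) • X))
          ≤ opNorm (Mprod X c a b) * opNorm (1 - c (b+1) • X) := opNorm_mul_le _ _
        _ ≤ (∏ k ∈ Finset.Icc a b, opNorm (1 - c k • X)) * opNorm (1 - c (b+1) • X) :=
            mul_le_mul_of_nonneg_right ih (opNorm_nonneg _)
    · rw [Mprod_empty X c (by omega), Finset.Icc_eq_empty (by omega), opNorm_one hd,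
        Finset.prod_empty]

-- Abel summation
lemma abel_sum {V : Type*} [AddCommGroup V] (F : ℕ → ℕ → V) {a m : ℕ} (h : a ≤ m) :
    ∑ k ∈ Finset.Icc a m, (F k (k+1) - F k k)
      = F m (m+1) - F a a - ∑ k ∈ Finset.Icc (a+1) m, (F k k - F (k-1) k) := by
  induction m, h using Nat.le_induction with
  | base => rw [Finset.Icc_self, Finset.sum_singleton, Finset.Icc_eq_empty (by omega),
      Finset.sum_empty]; abel
  | succ m hm ih =>
    rw [Finset.sum_Icc_succ_top (by omega), ih, Finset.sum_Icc_succ_top (by omega)]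
    simp only [Nat.add_sub_cancel]
    abel

-- analytic lemmas
lemma steps_pos (a : ℝ) (n : ℕ) : 0 < steps a n :=
  Real.rpow_pos_of_pos (by positivity) _

lemma one_le_cast_succ (n : ℕ) : (1:ℝ) ≤ (n:ℝ) + 1 := by
  have := Nat.cast_nonneg (α := ℝ) n; linarith

lemma steps_le_one {a : ℝ} (ha : 0 ≤ a) (n : ℕ) : steps a n ≤ 1 :=
  Real.rpow_le_one_of_one_le_of_nonpos (one_le_cast_succ n) (by linarith)

lemma steps_div_eq (a b : ℝ) (j : ℕ) :
    steps a j / steps b j = ((j:ℝ) + 1) ^ (b - a) := by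
  unfold steps
  rw [← Real.rpow_sub (by positivity)]
  ring_nf

lemma cast_succ_succ (j : ℕ) : ((j+1 : ℕ):ℝ) + 1 = ((j:ℝ) + 1) + 1 := by push_cast; ring

lemma r_antitone {a b : ℝ} (hba : b ≤ a) (j : ℕ) :
    steps a (j+1) / steps b (j+1) ≤ steps a j / steps b j := by
  rw [steps_div_eq, steps_div_eq, cast_succ_succ]
  exact Real.rpow_le_rpow_of_nonpos (by positivity) (by linarith) (by linarith)

lemma r_diff_le {a b : ℝ} (hb : 0 < b) (hba : b < a) (ha : a < 1) (j : ℕ) :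
    steps a j / steps b j - steps a (j+1) / steps b (j+1)
      ≤ 2 * (a - b) * steps a (j+1) * (steps a (j+1) / steps b (j+1)) := by
  rw [steps_div_eq, steps_div_eq, cast_succ_succ]
  set x : ℝ := (j:ℝ) + 1 with hxdef
  have hx1 : (1:ℝ) ≤ x := one_le_cast_succ j
  have hx0 : (0:ℝ) < x := by linarith
  set y : ℝ := x + 1 with hydef
  have hy0 : (0:ℝ) < y := by linarith
  have hy1 : (1:ℝ) ≤ y := by linarith
  set γ : ℝ := a - b with hγdef
  have hγ0 : 0 < γ := by linarith
  have hγ1 : γ < 1 := by linarith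
  -- x ^ (b - a) = y ^ (b-a) * (1 + 1/x) ^ γ
  have hkey : x ^ (b - a) = y ^ (b - a) * (1 + 1/x) ^ γ := by
    have h1x : 1 + 1/x = y / x := by field_simp; linarith
    rw [h1x, Real.div_rpow (by linarith) (by linarith)]
    have hba' : b - a = -γ := by rw [hγdef]; ring
    rw [hba', Real.rpow_neg (by linarith), Real.rpow_neg (by linarith)]
    field_simp
  have hbern : (1 + 1/x) ^ γ ≤ 1 + γ * (1/x) :=
    rpow_one_add_le_one_add_mul_self (le_trans (by norm_num : (-1:ℝ) ≤ 0) (by positivity)) (le_of_lt hγ0) (le_of_lt hγ1)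
  have hyba : (0:ℝ) < y ^ (b - a) := Real.rpow_pos_of_pos hy0 _
  have step1 : x ^ (b-a) - y ^ (b-a) ≤ y ^ (b-a) * (γ / x) := by
    rw [hkey]
    have := mul_le_mul_of_nonneg_left hbern (le_of_lt hyba)
    calc y ^ (b-a) * (1 + 1/x) ^ γ - y ^ (b-a) ≤ y ^ (b-a) * (1 + γ * (1/x)) - y ^ (b-a) := by linarith
      _ = y ^ (b-a) * (γ / x) := by ring
  have step2 : γ / x ≤ 2 * γ * y ^ (-(1:ℝ)) := by
    rw [Real.rpow_neg_one]
    rw [div_le_iff₀ hx0]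
    have h2 : y ≤ 2 * x := by linarith
    have : y⁻¹ * y ≤ y⁻¹ * (2*x) := mul_le_mul_of_nonneg_left h2 (by positivity)
    rw [inv_mul_cancel₀ (ne_of_gt hy0)] at this
    nlinarith [hγ0.le]
  have step3 : y ^ (-(1:ℝ)) ≤ y ^ (-a) := Real.rpow_le_rpow_of_exponent_le hy1 (by linarith)
  have hsteps : steps a (j+1) = y ^ (-a) := by
    unfold steps; rw [cast_succ_succ, ← hxdef, ← hydef]
  rw [hsteps]
  calc x ^ (b-a) - y ^ (b-a) ≤ y ^ (b-a) * (γ / x) := step1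
    _ ≤ y ^ (b-a) * (2 * γ * y ^ (-a)) := by
        apply mul_le_mul_of_nonneg_left _ (le_of_lt hyba)
        calc γ / x ≤ 2 * γ * y ^ (-(1:ℝ)) := step2
          _ ≤ 2 * γ * y ^ (-a) := by
              apply mul_le_mul_of_nonneg_left step3 (by positivity)
    _ = 2 * γ * y ^ (-a) * y ^ (b-a) := by ring

lemma sum_Icc_telescope (φ : ℕ → ℝ) {a m : ℕ} (h : a ≤ m + 1) :
    ∑ k ∈ Finset.Icc a m, (φ (k+1) - φ k) = φ (m+1) - φ a := by
  rw [← Finset.Ico_add_one_right_eq_Icc, Finset.sum_Ico_eq_sum_range]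
  have := Finset.sum_range_sub (fun i => φ (a + i)) (m + 1 - a)
  simp only [← Nat.add_assoc] at this ⊢
  rw [this]
  congr 2
  omega

lemma exp_sum_le (c : ℕ → ℝ) (hc0 : ∀ k, 0 < c k) (hc1 : ∀ k, c k ≤ 1) {q : ℝ} (hq : 0 < q)
    (a m : ℕ) :
    ∑ k ∈ Finset.Icc a m, c k * Real.exp (-(q/2) * ∑ j ∈ Finset.Icc (k+1) m, c j)
      ≤ 2 * Real.exp (q/2) / q := by
  set φ : ℕ → ℝ := fun k => Real.exp (-(q/2) * ∑ j ∈ Finset.Icc k m, c j) with hφ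
  have hKpos : 0 < 2 * Real.exp (q/2) / q := by positivity
  by_cases ham : a ≤ m
  swap
  · rw [Finset.Icc_eq_empty (by omega), Finset.sum_empty]; linarith
  have key : ∀ k ∈ Finset.Icc a m, c k * Real.exp (-(q/2) * ∑ j ∈ Finset.Icc (k+1) m, c j)
      ≤ (2 * Real.exp (q/2) / q) * (φ (k+1) - φ k) := by
    intro k hk
    obtain ⟨_, hkm⟩ := Finset.mem_Icc.mp hk
    have hsum : ∑ j ∈ Finset.Icc k m, c j = c k + ∑ j ∈ Finset.Icc (k+1) m, c j := by
      rw [← Finset.Ico_add_one_right_eq_Icc, Finset.sum_eq_sum_Ico_succ_bot (by omega), Finset.Ico_add_one_right_eq_Icc]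
    set S := ∑ j ∈ Finset.Icc (k+1) m, c j with hS
    set t : ℝ := q/2 * c k with ht
    have ht0 : 0 < t := mul_pos (by positivity) (hc0 k)
    have htq : t ≤ q/2 := by
      rw [ht]
      calc q/2 * c k ≤ q/2 * 1 := mul_le_mul_of_nonneg_left (hc1 k) (by positivity)
        _ = q/2 := by ring
    have hφk1 : φ (k+1) = Real.exp (-(q/2) * S) := rfl
    have hφk : φ k = Real.exp (-(q/2) * S) * Real.exp (-t) := by
      rw [hφ]; simp only; rw [hsum, ← Real.exp_add, ht]; ring_nf
    -- 1 - exp(-t) ≥ t * exp(-t)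
    have h4 : Real.exp (-t) * Real.exp t = 1 := by rw [← Real.exp_add]; simp
    have hB : t * Real.exp (-t) ≤ 1 - Real.exp (-t) := by
      nlinarith [mul_nonneg (Real.exp_pos (-t)).le
        (show (0:ℝ) ≤ Real.exp t - 1 - t by linarith [Real.add_one_le_exp t]), h4]
    have hA : t * Real.exp (-(q/2)) ≤ t * Real.exp (-t) :=
      mul_le_mul_of_nonneg_left (Real.exp_le_exp.mpr (by linarith)) ht0.le
    have hstep : q/2 * c k * Real.exp (-(q/2)) ≤ 1 - Real.exp (-t) := by
      rw [← ht]; linarith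
    have hE : 0 < Real.exp (-(q/2) * S) := Real.exp_pos _
    rw [hφk1, hφk]
    rw [div_mul_eq_mul_div, le_div_iff₀ hq]
    have hmul := mul_le_mul_of_nonneg_left hstep
      (mul_nonneg (by positivity : (0:ℝ) ≤ 2 * Real.exp (q/2)) hE.le)
    have hee : Real.exp (q/2) * Real.exp (-(q/2)) = 1 := by rw [← Real.exp_add]; simp
    calc c k * Real.exp (-(q/2) * S) * q
        = 2 * Real.exp (q/2) * Real.exp (-(q/2) * S) * (q/2 * c k * Real.exp (-(q/2))) := by
          rw [show (2:ℝ) * Real.exp (q/2) * Real.exp (-(q/2) * S) * (q/2 * c k * Real.exp (-(q/2)))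
            = (Real.exp (q/2) * Real.exp (-(q/2))) * (c k * Real.exp (-(q/2) * S) * q) by ring,
            hee, one_mul]
      _ ≤ 2 * Real.exp (q/2) * Real.exp (-(q/2) * S) * (1 - Real.exp (-t)) := hmul
      _ = 2 * Real.exp (q/2) * (Real.exp (-(q/2) * S) - Real.exp (-(q/2) * S) * Real.exp (-t)) := by
          ring
  calc ∑ k ∈ Finset.Icc a m, c k * Real.exp (-(q/2) * ∑ j ∈ Finset.Icc (k+1) m, c j)
      ≤ ∑ k ∈ Finset.Icc a m, (2 * Real.exp (q/2) / q) * (φ (k+1) - φ k) :=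
        Finset.sum_le_sum key
    _ = (2 * Real.exp (q/2) / q) * ∑ k ∈ Finset.Icc a m, (φ (k+1) - φ k) := by
        rw [Finset.mul_sum]
    _ ≤ 2 * Real.exp (q/2) / q := by
        rw [sum_Icc_telescope φ (by omega)]
        have h1 : φ (m+1) = 1 := by
          rw [hφ]; simp only; rw [Finset.Icc_eq_empty (by omega), Finset.sum_empty]; simp
        have h2 : 0 < φ a := Real.exp_pos _
        rw [h1]
        calc 2 * Real.exp (q/2) / q * (1 - φ a) ≤ 2 * Real.exp (q/2) / q * 1 := by
              apply mul_le_mul_of_nonneg_left _ hKpos.le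
              linarith
          _ = 2 * Real.exp (q/2) / q := by ring

set_option synthInstance.maxHeartbeats 1000000 in
lemma opNorm_smul_nonneg (A : Matrix (Fin d) (Fin d) ℝ) {s : ℝ} (hs : 0 ≤ s) :
    opNorm (s • A) = s * opNorm A := by
  have h : (Matrix.toEuclideanCLM (𝕜 := ℝ) (s • A) : E d →L[ℝ] E d)
      = s • Matrix.toEuclideanCLM (𝕜 := ℝ) A := map_smul _ s A
  unfold opNorm
  rw [h]
  have h2 := norm_smul (α := ℝ) (β := E d →L[ℝ] E d) s (Matrix.toEuclideanCLM (𝕜 := ℝ) A)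
  rw [h2, Real.norm_eq_abs, abs_of_nonneg hs]

lemma posdef_isUnit_det {A : Matrix (Fin d) (Fin d) ℝ} (hA : PosDefNS A) : IsUnit A.det := by
  rw [isUnit_iff_ne_zero]
  intro h0
  obtain ⟨v, hv, hv0⟩ := Matrix.exists_mulVec_eq_zero_iff.mpr h0
  set x : E d := (WithLp.equiv 2 (Fin d → ℝ)).symm v with hx
  have hx0 : x ≠ 0 := by
    intro h
    apply hv
    have := congrArg (WithLp.equiv 2 (Fin d → ℝ)) h
    simpa [hx] using this
  have happ : app A x = 0 := by
    rw [hx]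
    unfold app
    rw [WithLp.equiv_symm_apply, Matrix.toEuclideanCLM_toLp, hv0]
    simp
  have := hA x hx0
  rw [happ] at this
  simp at this

lemma inner_app_transpose (A : Matrix (Fin d) (Fin d) ℝ) (x : E d) :
    ⟪x, app Aᵀ x⟫ = ⟪x, app A x⟫ := by
  have hstar : Aᵀ = star A := by simp [Matrix.star_eq_conjTranspose]
  rw [hstar]
  unfold app
  rw [map_star, ContinuousLinearMap.star_eq_adjoint, ContinuousLinearMap.adjoint_inner_right]
  exact real_inner_comm _ _

lemma lambdaMin_sym_pos (hd : 0 < d) {A : Matrix (Fin d) (Fin d) ℝ} (hA : PosDefNS A) :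
    0 < lambdaMin (A + Aᵀ) := by
  haveI : Nonempty (Fin d) := ⟨⟨0, hd⟩⟩
  haveI : Nontrivial (E d) := by
    refine ⟨⟨EuclideanSpace.single (⟨0, hd⟩ : Fin d) (1:ℝ), 0, ?_⟩⟩
    intro h
    have := congrArg (fun f : E d => f ⟨0, hd⟩) h
    simp [EuclideanSpace.single_apply] at this
  obtain ⟨xs, hxs⟩ := (NormedSpace.sphere_nonempty (E := E d) (x := 0) (r := 1)).mpr zero_le_one
  haveI hne : Nonempty (Metric.sphere (0 : E d) 1) := ⟨⟨xs, hxs⟩⟩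
  set f : E d → ℝ := fun x => ⟪x, app (A + Aᵀ) x⟫ with hf
  have hcont : Continuous f := by
    apply Continuous.inner continuous_id
    exact (Matrix.toEuclideanCLM (𝕜 := ℝ) (A + Aᵀ)).continuous
  obtain ⟨x0, hx0mem, hx0min⟩ := (isCompact_sphere (0 : E d) 1).exists_isMinOn
    ⟨xs, hxs⟩ hcont.continuousOn
  have hx0norm : ‖x0‖ = 1 := mem_sphere_zero_iff_norm.mp hx0mem
  have hx0ne : x0 ≠ 0 := by
    intro h; rw [h] at hx0norm; simp at hx0norm
  have hfx0 : 0 < f x0 := by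
    rw [hf]
    simp only
    rw [add_app, inner_add_right, inner_app_transpose]
    have := hA x0 hx0ne
    linarith
  have hlam : f x0 ≤ lambdaMin (A + Aᵀ) := by
    unfold lambdaMin
    exact le_ciInf fun y => hx0min y.2
  linarith

lemma one_le_Cth (hd : 0 < d) (X : Matrix (Fin d) (Fin d) ℝ) {α q C : ℝ} (hα : 0 < α) (hq : 0 ≤ q)
    (h : ∀ n : ℕ, opNorm (1 - steps α n • X) ≤ C * Real.exp (-q * steps α n)) :
    1 ≤ C := by
  have hC0 : 0 ≤ C := by
    have h0 := h 0
    have h1 : (0:ℝ) ≤ C * Real.exp (-q * steps α 0) := le_trans (opNorm_nonneg _) h0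
    nlinarith [Real.exp_pos (-q * steps α 0)]
  have hlow : ∀ n : ℕ, 1 - steps α n * opNorm X ≤ C := by
    intro n
    have h1 : opNorm (1 - steps α n • X) ≤ C * Real.exp (-q * steps α n) := h n
    have h2 : Real.exp (-q * steps α n) ≤ 1 := by
      rw [show (1:ℝ) = Real.exp 0 by simp]
      apply Real.exp_le_exp.mpr
      have := steps_pos α n
      nlinarith
    have h3 : C * Real.exp (-q * steps α n) ≤ C := by nlinarith [Real.exp_pos (-q * steps α n)]
    have h4 : opNorm (1:Matrix (Fin d) (Fin d) ℝ) - opNorm (steps α n • X) ≤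
        opNorm (1 - steps α n • X) := by
      unfold opNorm; rw [_root_.map_sub]; exact norm_sub_norm_le _ _
    rw [opNorm_one hd, opNorm_smul_nonneg X (steps_pos α n).le] at h4
    linarith
  have htends : Filter.Tendsto (fun n : ℕ => 1 - steps α n * opNorm X) Filter.atTop
      (nhds (1 - 0 * opNorm X)) := by
    apply Filter.Tendsto.sub tendsto_const_nhds
    apply Filter.Tendsto.mul_const
    exact (tendsto_rpow_neg_atTop hα).comp
      (Filter.tendsto_atTop_add_const_right _ 1 tendsto_natCast_atTop_atTop)
  rw [show (1:ℝ) - 0 * opNorm X = 1 by ring] at htends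
  exact le_of_tendsto htends (Filter.Eventually.of_forall hlow)

end AuxLemmas

set_option maxHeartbeats 4000000 in
/-- the `θ`-bound \eqref{eqn:thBd} of Lemma `R_n w bound`. -/
theorem stmt17 {d : ℕ} (hd : 0 < d)
    (v1 v2 : E d) (Γ1 Γ2 W1 W2 : Matrix (Fin d) (Fin d) ℝ)
    (hW2 : PosDefNS W2) (hX1 : PosDefNS (Γ1 - W1 * W2⁻¹ * Γ2))
    (α β p δ : ℝ) (hβ : 0 < β) (hβα : β < α) (hα : α < 1)
    (hp : 1 < p) (hδ0 : 0 < δ) (hδ1 : δ < 1)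
    (Lθc Caθ : ℝ) (hLθc : 0 < Lθc) (hCaθ : 0 < Caθ)
    (q1 q2 : ℝ)
    (hq1 : q1 = lambdaMin ((Γ1 - W1 * W2⁻¹ * Γ2) + (Γ1 - W1 * W2⁻¹ * Γ2)ᵀ) / 4)
    (hq2 : q2 = lambdaMin (W2 + W2ᵀ) / 4)
    (Cθ : ℝ)
    (hCθ : ∀ i n : ℕ, i ≤ n →
      ∏ k ∈ Finset.Icc i n, opNorm (1 - steps α k • (Γ1 - W1 * W2⁻¹ * Γ2)) ≤
        Cθ * Real.exp (-q1 * ∑ k ∈ Finset.Icc i n, steps α k))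
    (θ w M1 M2 : ℕ → E d)
    (hθrec : ∀ n : ℕ, θ (n + 1) =
      θ n + steps α n • (v1 - app Γ1 (θ n) - app W1 (w n) + M1 (n + 1)))
    (hwrec : ∀ n : ℕ, w (n + 1) =
      w n + steps β n • (v2 - app Γ2 (θ n) - app W2 (w n) + M2 (n + 1)))
    (θstar wstar : E d)
    (hθstar : θstar = app (Γ1 - W1 * W2⁻¹ * Γ2)⁻¹ (v1 - app (W1 * W2⁻¹) v2))
    (hwstar : wstar = app W2⁻¹ (v2 - app Γ2 θstar))
    -- the error threshold `ε^{(θ)}`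
    (εθ : ℕ → ℝ)
    (hεθ : ∀ k : ℕ, εθ k = Real.sqrt ((d : ℝ) ^ 3 * Lθc * Caθ) *
      (((k : ℝ) + 1) ^ (-(α / 2)) *
        Real.sqrt (Real.log (4 * (d : ℝ) ^ 2 * ((k : ℝ) + 1) ^ p / δ))))
    (n0 n : ℕ) (hn : n0 ≤ n)
    (u : ℕ → ℝ) (hupos : ∀ k, 0 < u k) (hudec : ∀ k, u (k + 1) ≤ u k)
    (huα : AlphaModerateFrom α β q1 u n0) (huβ : BetaModerateFrom α β q2 u n0)
    (hw : ∀ k : ℕ, n0 ≤ k → k ≤ n → ‖w k - wstar‖ ≤ u k)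
    (hL : n0 + 1 ≤ n → ‖Lth Γ1 Γ2 W1 W2 α M1 M2 n0 (n - 1)‖ ≤ εθ (n - 1)) :
    ‖θ n - θstar‖ ≤
      Cθ * max (opNorm (W1 * W2⁻¹)) 1 *
          ((‖θ n0 - θstar‖ + steps α n0 / steps β n0 * ‖w n0 - wstar‖) *
            Real.exp (-q1 * ∑ j ∈ Finset.Icc (n0 + 1) (n - 1), steps α j)) +
        opNorm (W1 * W2⁻¹) *
            (1 + 2 * Real.exp (q1 / 2) / q1 *
              (opNorm (Γ1 - W1 * W2⁻¹ * Γ2) +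
                2 * (α - β) * (1 + opNorm (Γ1 - W1 * W2⁻¹ * Γ2))) * Cθ) *
          (steps α (n - 1) / steps β (n - 1)) * u (n - 1) +
        εθ (n - 1) := by
  haveI : Nonempty (Fin d) := ⟨⟨0, hd⟩⟩
  set A : Matrix (Fin d) (Fin d) ℝ := W1 * W2⁻¹ with hAdef
  set X : Matrix (Fin d) (Fin d) ℝ := Γ1 - A * Γ2 with hXdef
  have hsα : ∀ k, 0 < steps α k := steps_pos α
  have hsβ : ∀ k, 0 < steps β k := steps_pos β
  have hα1 : ∀ k, steps α k ≤ 1 := steps_le_one (by linarith)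
  have hγ0 : (0:ℝ) < α - β := by linarith
  have hq1pos : 0 < q1 := by
    rw [hq1]
    have := lambdaMin_sym_pos hd hX1
    linarith
  have hXdet : IsUnit X.det := posdef_isUnit_det hX1
  have hW2det : IsUnit W2.det := posdef_isUnit_det hW2
  have hCθ1 : (1:ℝ) ≤ Cθ := by
    apply one_le_Cth (q := q1) hd X (show (0:ℝ) < α by linarith) (by linarith)
    intro k
    have h := hCθ k k le_rfl
    simpa using h
  have hCθ0 : (0:ℝ) ≤ Cθ := by linarith
  -- norm bound for the products
  have hP : ∀ i m : ℕ, opNorm (Mprod X (steps α) i m)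
      ≤ Cθ * Real.exp (-q1 * ∑ k ∈ Finset.Icc i m, steps α k) := by
    intro i m
    by_cases him : i ≤ m
    · exact le_trans (opNorm_Mprod_le hd X (steps α) i m) (hCθ i m him)
    · rw [Mprod_empty _ _ (by omega), Finset.Icc_eq_empty (by omega), Finset.sum_empty,
        opNorm_one hd, mul_zero, Real.exp_zero, mul_one]
      exact hCθ1
  -- fixed point identities
  have hfix2 : v2 - app Γ2 θstar - app W2 wstar = 0 := by
    rw [hwstar, ← app_mul W2 W2⁻¹ _, Matrix.mul_nonsing_inv _ hW2det, app_one]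
    abel
  have hAW2 : A * W2 = W1 := by
    rw [hAdef, Matrix.mul_assoc, Matrix.nonsing_inv_mul _ hW2det, Matrix.mul_one]
  have hfix1 : v1 - app Γ1 θstar - app W1 wstar = 0 := by
    have h1 : app W1 wstar = app A (v2 - app Γ2 θstar) := by
      rw [hwstar, hAdef, app_mul]
    have h2 : app X θstar = v1 - app A v2 := by
      rw [hθstar, ← app_mul, Matrix.mul_nonsing_inv _ hXdet, app_one]
    have h3 : app X θstar = app Γ1 θstar - app A (app Γ2 θstar) := by
      rw [hXdef, sub_app, app_mul]
    rw [h1, app_sub']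
    have h4 : v1 - app Γ1 θstar - (app A v2 - app A (app Γ2 θstar))
        = (v1 - app A v2) - app X θstar := by rw [h3]; abel
    rw [h4, h2, sub_self]
  -- one step recursion
  have hstep : ∀ k : ℕ, θ (k+1) - θstar
      = app (1 - steps α k • X) (θ k - θstar)
        + (steps α k / steps β k) • app A ((w (k+1) - wstar) - (w k - wstar))
        + steps α k • (M1 (k+1) - app A (M2 (k+1))) := by
    intro k
    have hβne : steps β k ≠ 0 := (hsβ k).ne'
    have hw1 : (w (k+1) - wstar) - (w k - wstar)
        = steps β k • (v2 - app Γ2 (θ k) - app W2 (w k) + M2 (k+1)) := by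
      rw [hwrec k]; abel
    have h5 : (steps β k)⁻¹ • ((w (k+1) - wstar) - (w k - wstar))
        = (v2 - app Γ2 (θ k) - app W2 (w k)) + M2 (k+1) := by
      rw [hw1, smul_smul, inv_mul_cancel₀ hβne, one_smul]
    have he : app Γ2 (θ k - θstar) + app W2 (w k - wstar)
        = M2 (k+1) - (steps β k)⁻¹ • ((w (k+1) - wstar) - (w k - wstar)) := by
      rw [h5, app_sub', app_sub']
      have h6 : (app Γ2 (θ k) - app Γ2 θstar + (app W2 (w k) - app W2 wstar))
          - (M2 (k+1) - ((v2 - app Γ2 (θ k) - app W2 (w k)) + M2 (k+1)))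
          = v2 - app Γ2 θstar - app W2 wstar := by abel
      have h7 := hfix2
      rw [← h6] at h7
      exact sub_eq_zero.mp h7
    have hv1 : v1 - app Γ1 (θ k) - app W1 (w k)
        = -(app Γ1 (θ k - θstar) + app W1 (w k - wstar)) := by
      rw [app_sub', app_sub']
      have h6 : (v1 - app Γ1 (θ k) - app W1 (w k))
          - (-(app Γ1 (θ k) - app Γ1 θstar + (app W1 (w k) - app W1 wstar)))
          = v1 - app Γ1 θstar - app W1 wstar := by abel
      have h7 := hfix1
      rw [← h6] at h7
      exact sub_eq_zero.mp h7
    have hdec : app Γ1 (θ k - θstar) + app W1 (w k - wstar)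
        = app X (θ k - θstar)
          + app A (app Γ2 (θ k - θstar) + app W2 (w k - wstar)) := by
      rw [hXdef, sub_app, app_mul, app_add, ← app_mul A W2, hAW2]
      abel
    rw [hθrec k]
    rw [show θ k + steps α k • (v1 - app Γ1 (θ k) - app W1 (w k) + M1 (k+1)) - θstar
      = (θ k - θstar) + steps α k • (v1 - app Γ1 (θ k) - app W1 (w k) + M1 (k+1)) by abel]
    rw [hv1, hdec, he]
    rw [show app (1 - steps α k • X) (θ k - θstar)
      = (θ k - θstar) - steps α k • app X (θ k - θstar) by
        rw [sub_app, app_one, smul_app]]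
    rw [app_sub' A, app_smul' A]
    module
  -- unrolled recursion
  have hunroll : ∀ M : ℕ, n0 ≤ M → θ (M+1) - θstar
      = app (Mprod X (steps α) n0 M) (θ n0 - θstar)
        + (∑ k ∈ Finset.Icc n0 M, (steps α k / steps β k) •
            app (Mprod X (steps α) (k+1) M) (app A ((w (k+1) - wstar) - (w k - wstar))))
        + (∑ k ∈ Finset.Icc n0 M, steps α k •
            app (Mprod X (steps α) (k+1) M) (M1 (k+1) - app A (M2 (k+1)))) := by
    intro M hM
    induction M, hM using Nat.le_induction with
    | base =>
      have h1 : Mprod X (steps α) n0 n0 = 1 - steps α n0 • X := by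
        unfold Mprod
        rw [show n0 + 1 - n0 = 1 by omega]
        simp
      have h2 : Mprod X (steps α) (n0+1) n0 = 1 := Mprod_empty _ _ (by omega)
      rw [Finset.Icc_self, Finset.sum_singleton, Finset.sum_singleton, h1, h2, app_one, app_one]
      exact hstep n0
    | succ M hM ih =>
      have hrec := hstep (M+1)
      rw [ih] at hrec
      rw [app_add, app_add] at hrec
      rw [← app_mul (1 - steps α (M+1) • X) (Mprod X (steps α) n0 M),
        Mprod_mul_left X (steps α) (by omega)] at hrec
      have hsum1 : app (1 - steps α (M+1) • X)
          (∑ k ∈ Finset.Icc n0 M, (steps α k / steps β k) •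
            app (Mprod X (steps α) (k+1) M) (app A ((w (k+1) - wstar) - (w k - wstar))))
          = ∑ k ∈ Finset.Icc n0 M, (steps α k / steps β k) •
            app (Mprod X (steps α) (k+1) (M+1)) (app A ((w (k+1) - wstar) - (w k - wstar))) := by
        rw [app_sum]
        apply Finset.sum_congr rfl
        intro k hk
        have hkM : k ≤ M := (Finset.mem_Icc.mp hk).2
        rw [app_smul', ← app_mul, Mprod_mul_left X (steps α) (by omega)]
      have hsum2 : app (1 - steps α (M+1) • X)
          (∑ k ∈ Finset.Icc n0 M, steps α k •
            app (Mprod X (steps α) (k+1) M) (M1 (k+1) - app A (M2 (k+1))))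
          = ∑ k ∈ Finset.Icc n0 M, steps α k •
            app (Mprod X (steps α) (k+1) (M+1)) (M1 (k+1) - app A (M2 (k+1))) := by
        rw [app_sum]
        apply Finset.sum_congr rfl
        intro k hk
        have hkM : k ≤ M := (Finset.mem_Icc.mp hk).2
        rw [app_smul', ← app_mul, Mprod_mul_left X (steps α) (by omega)]
      rw [hsum1, hsum2] at hrec
      rw [hrec]
      have hemp : Mprod X (steps α) (M+1+1) (M+1) = 1 := Mprod_empty _ _ (by omega)
      rw [Finset.sum_Icc_succ_top (show n0 ≤ M + 1 by omega),
        Finset.sum_Icc_succ_top (show n0 ≤ M + 1 by omega), hemp, app_one, app_one]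
      abel
  -- main case split
  rcases eq_or_lt_of_le hn with heq | hlt
  · -- n = n0
    subst heq
    have hIcc : Finset.Icc (n0+1) (n0-1) = ∅ := Finset.Icc_eq_empty (by omega)
    rw [hIcc, Finset.sum_empty, mul_zero, Real.exp_zero, mul_one]
    have hT3 : 0 ≤ εθ (n0 - 1) := by
      rw [hεθ]
      positivity
    have hCU0 : (0:ℝ) ≤ opNorm X + 2 * (α - β) * (1 + opNorm X) := by
      have := opNorm_nonneg X
      nlinarith
    have hT2 : 0 ≤ opNorm A *
        (1 + 2 * Real.exp (q1 / 2) / q1 * (opNorm X + 2 * (α - β) * (1 + opNorm X)) * Cθ) *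
        (steps α (n0 - 1) / steps β (n0 - 1)) * u (n0 - 1) := by
      have h1 : (0:ℝ) ≤ 2 * Real.exp (q1 / 2) / q1 :=
        div_nonneg (by positivity) hq1pos.le
      have h2 : (0:ℝ) ≤ 1 + 2 * Real.exp (q1 / 2) / q1 *
          (opNorm X + 2 * (α - β) * (1 + opNorm X)) * Cθ := by
        nlinarith [mul_nonneg (mul_nonneg h1 hCU0) hCθ0]
      have h3 : (0:ℝ) ≤ steps α (n0-1) / steps β (n0-1) :=
        (div_pos (hsα _) (hsβ _)).le
      exact mul_nonneg (mul_nonneg (mul_nonneg (opNorm_nonneg A) h2) h3) (hupos _).le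
    have hM1 : (1:ℝ) ≤ max (opNorm A) 1 := le_max_right _ _
    have hx0 : (0:ℝ) ≤ ‖θ n0 - θstar‖ := norm_nonneg _
    have hρ0 : (0:ℝ) ≤ steps α n0 / steps β n0 * ‖w n0 - wstar‖ :=
      mul_nonneg (div_pos (hsα n0) (hsβ n0)).le (norm_nonneg _)
    have hCM : (1:ℝ) ≤ Cθ * max (opNorm A) 1 := by
      calc (1:ℝ) = 1 * 1 := (one_mul 1).symm
        _ ≤ Cθ * max (opNorm A) 1 := mul_le_mul hCθ1 hM1 zero_le_one hCθ0
    have hkey : ‖θ n0 - θstar‖ + steps α n0 / steps β n0 * ‖w n0 - wstar‖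
        ≤ Cθ * max (opNorm A) 1 *
          (‖θ n0 - θstar‖ + steps α n0 / steps β n0 * ‖w n0 - wstar‖) :=
      le_mul_of_one_le_left (add_nonneg hx0 hρ0) hCM
    linarith
  · -- n0 < n
    obtain ⟨m, rfl⟩ : ∃ m, n = m + 1 := ⟨n - 1, by omega⟩
    have hn0m : n0 ≤ m := by omega
    simp only [Nat.add_sub_cancel]
    have hLconv : Lth Γ1 Γ2 W1 W2 α M1 M2 n0 m
        = ∑ k ∈ Finset.Icc n0 m, steps α k •
            app (Mprod X (steps α) (k+1) m) (M1 (k+1) - app A (M2 (k+1))) := by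
      unfold Lth
      simp only [← hAdef, ← hXdef]
    have hLbound : ‖∑ k ∈ Finset.Icc n0 m, steps α k •
        app (Mprod X (steps α) (k+1) m) (M1 (k+1) - app A (M2 (k+1)))‖ ≤ εθ m := by
      rw [← hLconv]
      have := hL (by omega)
      simpa using this
    -- Abel summation
    have habel := abel_sum (fun k j => (steps α k / steps β k) •
      app (Mprod X (steps α) (k+1) m) (app A (w j - wstar))) hn0m
    beta_reduce at habel
    have hSconv : (∑ k ∈ Finset.Icc n0 m, (steps α k / steps β k) •
          app (Mprod X (steps α) (k+1) m) (app A ((w (k+1) - wstar) - (w k - wstar))))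
        = ∑ k ∈ Finset.Icc n0 m,
          ((steps α k / steps β k) • app (Mprod X (steps α) (k+1) m) (app A (w (k+1) - wstar))
            - (steps α k / steps β k) • app (Mprod X (steps α) (k+1) m) (app A (w k - wstar))) := by
      apply Finset.sum_congr rfl
      intro k hk
      rw [show (w (k+1) - wstar) - (w k - wstar) = (w (k+1) - wstar) - (w k - wstar) from rfl,
        app_sub' A, app_sub', smul_sub]
    have hiden := hunroll m hn0m
    rw [hSconv, habel] at hiden
    -- bounds
    have hB1 : ‖app (Mprod X (steps α) n0 m) (θ n0 - θstar)‖
        ≤ Cθ * Real.exp (-q1 * ∑ j ∈ Finset.Icc (n0+1) m, steps α j) * ‖θ n0 - θstar‖ := by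
      calc ‖app (Mprod X (steps α) n0 m) (θ n0 - θstar)‖
          ≤ opNorm (Mprod X (steps α) n0 m) * ‖θ n0 - θstar‖ := norm_app_le _ _
        _ ≤ (Cθ * Real.exp (-q1 * ∑ j ∈ Finset.Icc n0 m, steps α j)) * ‖θ n0 - θstar‖ :=
            mul_le_mul_of_nonneg_right (hP n0 m) (norm_nonneg _)
        _ ≤ Cθ * Real.exp (-q1 * ∑ j ∈ Finset.Icc (n0+1) m, steps α j) * ‖θ n0 - θstar‖ := by
            apply mul_le_mul_of_nonneg_right _ (norm_nonneg _)
            apply mul_le_mul_of_nonneg_left _ hCθ0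
            apply Real.exp_le_exp.mpr
            have hsub : ∑ j ∈ Finset.Icc (n0+1) m, steps α j
                ≤ ∑ j ∈ Finset.Icc n0 m, steps α j := by
              apply Finset.sum_le_sum_of_subset_of_nonneg
              · apply Finset.Icc_subset_Icc_left; omega
              · intro i _ _; exact (hsα i).le
            nlinarith [mul_nonneg hq1pos.le (sub_nonneg.mpr hsub)]
    have hwm1 : ‖w (m+1) - wstar‖ ≤ u m :=
      le_trans (hw (m+1) (by omega) le_rfl) (hudec m)
    have hB2 : ‖(steps α m / steps β m) •
        app (Mprod X (steps α) (m+1) m) (app A (w (m+1) - wstar))‖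
        ≤ opNorm A * (steps α m / steps β m) * u m := by
      rw [Mprod_empty _ _ (by omega), app_one, norm_smul, Real.norm_eq_abs,
        abs_of_pos (div_pos (hsα m) (hsβ m))]
      calc (steps α m / steps β m) * ‖app A (w (m+1) - wstar)‖
          ≤ (steps α m / steps β m) * (opNorm A * ‖w (m+1) - wstar‖) :=
            mul_le_mul_of_nonneg_left (norm_app_le _ _) (div_pos (hsα m) (hsβ m)).le
        _ ≤ (steps α m / steps β m) * (opNorm A * u m) := by
            apply mul_le_mul_of_nonneg_left _ (div_pos (hsα m) (hsβ m)).le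
            exact mul_le_mul_of_nonneg_left hwm1 (opNorm_nonneg _)
        _ = opNorm A * (steps α m / steps β m) * u m := by ring
    have hB3 : ‖(steps α n0 / steps β n0) •
        app (Mprod X (steps α) (n0+1) m) (app A (w n0 - wstar))‖
        ≤ Cθ * Real.exp (-q1 * ∑ j ∈ Finset.Icc (n0+1) m, steps α j) *
          (opNorm A * ((steps α n0 / steps β n0) * ‖w n0 - wstar‖)) := by
      rw [norm_smul, Real.norm_eq_abs, abs_of_pos (div_pos (hsα n0) (hsβ n0))]
      calc (steps α n0 / steps β n0) * ‖app (Mprod X (steps α) (n0+1) m) (app A (w n0 - wstar))‖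
          ≤ (steps α n0 / steps β n0) *
            (opNorm (Mprod X (steps α) (n0+1) m) * ‖app A (w n0 - wstar)‖) :=
            mul_le_mul_of_nonneg_left (norm_app_le _ _) (div_pos (hsα n0) (hsβ n0)).le
        _ ≤ (steps α n0 / steps β n0) *
            ((Cθ * Real.exp (-q1 * ∑ j ∈ Finset.Icc (n0+1) m, steps α j)) *
              (opNorm A * ‖w n0 - wstar‖)) := by
            apply mul_le_mul_of_nonneg_left _ (div_pos (hsα n0) (hsβ n0)).le
            apply mul_le_mul (hP (n0+1) m) (norm_app_le _ _) (norm_nonneg _)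
            exact mul_nonneg hCθ0 (Real.exp_nonneg _)
        _ = Cθ * Real.exp (-q1 * ∑ j ∈ Finset.Icc (n0+1) m, steps α j) *
            (opNorm A * ((steps α n0 / steps β n0) * ‖w n0 - wstar‖)) := by ring
    -- moderate chain
    have hru : ∀ t k, n0 ≤ k →
        (steps α k / steps β k) * u k ≤ (steps α (k+t) / steps β (k+t)) * u (k+t) *
          Real.exp (q1/2 * ∑ j ∈ Finset.Icc (k+1) (k+t), steps α j) := by
      intro t
      induction t with
      | zero =>
        intro k hk
        rw [Nat.add_zero, Finset.Icc_eq_empty (by omega), Finset.sum_empty, mul_zero,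
          Real.exp_zero, mul_one]
      | succ t ih =>
        intro k hk
        have h1 := ih k hk
        have h2 := huα (k+t) (by omega)
        have hu1 : (steps α (k+t) / steps β (k+t)) * u (k+t)
            ≤ (steps α (k+t+1) / steps β (k+t+1)) * u (k+t+1) *
              Real.exp (q1/2 * steps α (k+t+1)) := by
          have hup : 0 < u (k+t+1) := hupos _
          rw [div_le_iff₀ hup] at h2
          have e1 := (hsα (k+t)).ne'
          have e2 := (hsβ (k+t)).ne'
          have e3 := (hsα (k+t+1)).ne'
          have e4 := (hsβ (k+t+1)).ne'
          calc (steps α (k+t) / steps β (k+t)) * u (k+t)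
              ≤ (steps α (k+t) / steps β (k+t)) *
                ((steps α (k+t+1) / steps α (k+t)) * (steps β (k+t) / steps β (k+t+1)) *
                  Real.exp (q1/2 * steps α (k+t+1)) * u (k+t+1)) := by
                apply mul_le_mul_of_nonneg_left h2 (div_pos (hsα _) (hsβ _)).le
            _ = (steps α (k+t+1) / steps β (k+t+1)) * u (k+t+1) *
                Real.exp (q1/2 * steps α (k+t+1)) := by
                field_simp
        calc (steps α k / steps β k) * u k
            ≤ (steps α (k+t) / steps β (k+t)) * u (k+t) *
              Real.exp (q1/2 * ∑ j ∈ Finset.Icc (k+1) (k+t), steps α j) := h1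
          _ ≤ ((steps α (k+t+1) / steps β (k+t+1)) * u (k+t+1) *
              Real.exp (q1/2 * steps α (k+t+1))) *
              Real.exp (q1/2 * ∑ j ∈ Finset.Icc (k+1) (k+t), steps α j) :=
              mul_le_mul_of_nonneg_right hu1 (Real.exp_nonneg _)
          _ = (steps α (k+t+1) / steps β (k+t+1)) * u (k+t+1) *
              Real.exp (q1/2 * ∑ j ∈ Finset.Icc (k+1) (k+t+1), steps α j) := by
              rw [Finset.sum_Icc_succ_top (show k+1 ≤ k+t+1 by omega)]
              rw [mul_add, Real.exp_add]
              ring_nf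
    -- the difference sum bound
    set CU : ℝ := opNorm X + 2 * (α - β) * (1 + opNorm X) with hCU
    have hCU0 : (0:ℝ) ≤ CU := by
      have := opNorm_nonneg X
      rw [hCU]; nlinarith
    have hB4 : ‖∑ k ∈ Finset.Icc (n0+1) m,
        ((steps α k / steps β k) • app (Mprod X (steps α) (k+1) m) (app A (w k - wstar))
          - (steps α (k-1) / steps β (k-1)) • app (Mprod X (steps α) (k-1+1) m) (app A (w k - wstar)))‖
        ≤ CU * opNorm A * Cθ * ((steps α m / steps β m) * u m) *
          (2 * Real.exp (q1/2) / q1) := by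
      calc ‖∑ k ∈ Finset.Icc (n0+1) m, ((steps α k / steps β k) •
            app (Mprod X (steps α) (k+1) m) (app A (w k - wstar))
            - (steps α (k-1) / steps β (k-1)) • app (Mprod X (steps α) (k-1+1) m) (app A (w k - wstar)))‖
          ≤ ∑ k ∈ Finset.Icc (n0+1) m, ‖(steps α k / steps β k) •
            app (Mprod X (steps α) (k+1) m) (app A (w k - wstar))
            - (steps α (k-1) / steps β (k-1)) • app (Mprod X (steps α) (k-1+1) m)
                (app A (w k - wstar))‖ :=
            norm_sum_le _ _
        _ ≤ ∑ k ∈ Finset.Icc (n0+1) m, (CU * opNorm A * Cθ * ((steps α m / steps β m) * u m)) *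
            (steps α k * Real.exp (-(q1/2) * ∑ j ∈ Finset.Icc (k+1) m, steps α j)) := by
            apply Finset.sum_le_sum
            intro k hk
            obtain ⟨hk1, hk2⟩ := Finset.mem_Icc.mp hk
            obtain ⟨j, rfl⟩ : ∃ j, k = j + 1 := ⟨k - 1, by omega⟩
            simp only [Nat.add_sub_cancel]
            set z : E d := app (Mprod X (steps α) (j+1+1) m) (app A (w (j+1) - wstar)) with hz
            have hPk : Mprod X (steps α) (j+1) m
                = (1 - steps α (j+1) • X) * Mprod X (steps α) (j+1+1) m :=
              Mprod_cons _ _ (by omega)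
            have hzdec : app (Mprod X (steps α) (j+1) m) (app A (w (j+1) - wstar))
                = z - steps α (j+1) • app X z := by
              rw [hPk, app_mul, sub_app, app_one, smul_app, hz]
            rw [hzdec]
            have hdiff : (steps α (j+1) / steps β (j+1)) • z
                - (steps α j / steps β j) • (z - steps α (j+1) • app X z)
                = (steps α (j+1) / steps β (j+1) - steps α j / steps β j) • z
                  + ((steps α j / steps β j) * steps α (j+1)) • app X z := by
              module
            rw [hdiff]
            have hznorm : ‖z‖ ≤ Cθ * Real.exp (-q1 * ∑ i ∈ Finset.Icc (j+1+1) m, steps α i) *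
                (opNorm A * u (j+1)) := by
              calc ‖z‖ ≤ opNorm (Mprod X (steps α) (j+1+1) m) * ‖app A (w (j+1) - wstar)‖ :=
                  norm_app_le _ _
                _ ≤ (Cθ * Real.exp (-q1 * ∑ i ∈ Finset.Icc (j+1+1) m, steps α i)) *
                    (opNorm A * u (j+1)) := by
                  apply mul_le_mul (hP _ _)
                  · calc ‖app A (w (j+1) - wstar)‖ ≤ opNorm A * ‖w (j+1) - wstar‖ :=
                        norm_app_le _ _
                      _ ≤ opNorm A * u (j+1) :=
                        mul_le_mul_of_nonneg_left (hw (j+1) (by omega) (by omega))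
                          (opNorm_nonneg _)
                  · exact norm_nonneg _
                  · exact mul_nonneg hCθ0 (Real.exp_nonneg _)
            have hrd := r_diff_le hβ hβα hα j
            have hra := r_antitone (le_of_lt hβα) j
            have hXz : ‖app X z‖ ≤ opNorm X * ‖z‖ := norm_app_le _ _
            have hz0 : (0:ℝ) ≤ ‖z‖ := norm_nonneg _
            -- coefficient bound
            have hcoef : ‖(steps α (j+1) / steps β (j+1) - steps α j / steps β j) • z
                + ((steps α j / steps β j) * steps α (j+1)) • app X z‖
                ≤ (steps α (j+1) * (steps α (j+1) / steps β (j+1)) * CU) * ‖z‖ := by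
              calc ‖(steps α (j+1) / steps β (j+1) - steps α j / steps β j) • z
                  + ((steps α j / steps β j) * steps α (j+1)) • app X z‖
                  ≤ ‖(steps α (j+1) / steps β (j+1) - steps α j / steps β j) • z‖
                    + ‖((steps α j / steps β j) * steps α (j+1)) • app X z‖ := norm_add_le _ _
                _ = |steps α (j+1) / steps β (j+1) - steps α j / steps β j| * ‖z‖
                    + ((steps α j / steps β j) * steps α (j+1)) * ‖app X z‖ := by
                    rw [norm_smul, norm_smul, Real.norm_eq_abs, Real.norm_eq_abs,
                      abs_of_pos (mul_pos (div_pos (hsα j) (hsβ j)) (hsα (j+1)))]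
                _ ≤ (steps α j / steps β j - steps α (j+1) / steps β (j+1)) * ‖z‖
                    + ((steps α j / steps β j) * steps α (j+1)) * (opNorm X * ‖z‖) := by
                    have habs : |steps α (j+1) / steps β (j+1) - steps α j / steps β j|
                        = steps α j / steps β j - steps α (j+1) / steps β (j+1) := by
                      rw [abs_of_nonpos (by linarith)]; ring
                    rw [habs]
                    have := mul_le_mul_of_nonneg_left hXz
                      (mul_pos (div_pos (hsα j) (hsβ j)) (hsα (j+1))).le
                    linarith
                _ = ((steps α j / steps β j - steps α (j+1) / steps β (j+1))
                      + (steps α j / steps β j * steps α (j+1)) * opNorm X) * ‖z‖ := by ring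
                _ ≤ (steps α (j+1) * (steps α (j+1) / steps β (j+1)) * CU) * ‖z‖ := by
                    apply mul_le_mul_of_nonneg_right _ hz0
                    rw [hCU]
                    have hc1 : steps α (j+1) ≤ 1 := hα1 (j+1)
                    have hc0 : 0 < steps α (j+1) := hsα (j+1)
                    have hr0 : 0 < steps α (j+1) / steps β (j+1) :=
                      div_pos (hsα _) (hsβ _)
                    have hXn := opNorm_nonneg X
                    nlinarith [mul_le_mul_of_nonneg_right hrd (mul_nonneg hc0.le hXn),
                      mul_nonneg (mul_nonneg (mul_nonneg
                        (show (0:ℝ) ≤ 2*(α-β) by linarith) hr0.le)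
                        (mul_nonneg hc0.le hXn)) (sub_nonneg.mpr hc1)]
            calc ‖(steps α (j+1) / steps β (j+1) - steps α j / steps β j) • z
                + ((steps α j / steps β j) * steps α (j+1)) • app X z‖
                ≤ (steps α (j+1) * (steps α (j+1) / steps β (j+1)) * CU) * ‖z‖ := hcoef
              _ ≤ (steps α (j+1) * (steps α (j+1) / steps β (j+1)) * CU) *
                  (Cθ * Real.exp (-q1 * ∑ i ∈ Finset.Icc (j+1+1) m, steps α i) *
                    (opNorm A * u (j+1))) := by
                  apply mul_le_mul_of_nonneg_left hznorm
                    (mul_nonneg (mul_nonneg (hsα _).le (div_pos (hsα _) (hsβ _)).le) hCU0)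
              _ ≤ (CU * opNorm A * Cθ * ((steps α m / steps β m) * u m)) *
                  (steps α (j+1) * Real.exp (-(q1/2) * ∑ i ∈ Finset.Icc (j+1+1) m, steps α i)) := by
                  -- use moderate chain
                  have hmod : (steps α (j+1) / steps β (j+1)) * u (j+1)
                      ≤ (steps α m / steps β m) * u m *
                        Real.exp (q1/2 * ∑ i ∈ Finset.Icc (j+1+1) m, steps α i) := by
                    have := hru (m - (j+1)) (j+1) (by omega)
                    rw [show j+1+(m-(j+1)) = m by omega] at this
                    exact this
                  have hS0 : (0:ℝ) ≤ ∑ i ∈ Finset.Icc (j+1+1) m, steps α i :=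
                    Finset.sum_nonneg fun i _ => (hsα i).le
                  set S : ℝ := ∑ i ∈ Finset.Icc (j+1+1) m, steps α i
                  have hee : Real.exp (-q1 * S) * Real.exp (q1/2 * S)
                      = Real.exp (-(q1/2) * S) := by
                    rw [← Real.exp_add]; ring_nf
                  have hE1 : (0:ℝ) < Real.exp (-q1 * S) := Real.exp_pos _
                  have h10 : steps α (j+1) * (steps α (j+1) / steps β (j+1)) * CU *
                      (Cθ * Real.exp (-q1 * S) * (opNorm A * u (j+1)))
                      = (CU * opNorm A * Cθ * ((steps α (j+1) / steps β (j+1)) * u (j+1))) *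
                        (steps α (j+1) * Real.exp (-q1 * S)) := by ring
                  rw [h10]
                  have h11 : (CU * opNorm A * Cθ * ((steps α (j+1) / steps β (j+1)) * u (j+1))) *
                      (steps α (j+1) * Real.exp (-q1 * S))
                      ≤ (CU * opNorm A * Cθ * ((steps α m / steps β m) * u m *
                          Real.exp (q1/2 * S))) * (steps α (j+1) * Real.exp (-q1 * S)) := by
                    apply mul_le_mul_of_nonneg_right _
                      (mul_nonneg (hsα _).le (Real.exp_nonneg _))
                    apply mul_le_mul_of_nonneg_left hmod
                    exact mul_nonneg (mul_nonneg hCU0 (opNorm_nonneg A)) hCθ0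
                  calc (CU * opNorm A * Cθ * ((steps α (j+1) / steps β (j+1)) * u (j+1))) *
                      (steps α (j+1) * Real.exp (-q1 * S))
                      ≤ (CU * opNorm A * Cθ * ((steps α m / steps β m) * u m *
                          Real.exp (q1/2 * S))) * (steps α (j+1) * Real.exp (-q1 * S)) := h11
                    _ = (CU * opNorm A * Cθ * ((steps α m / steps β m) * u m)) *
                        (steps α (j+1) * (Real.exp (-q1 * S) * Real.exp (q1/2 * S))) := by ring
                    _ = (CU * opNorm A * Cθ * ((steps α m / steps β m) * u m)) *
                        (steps α (j+1) * Real.exp (-(q1/2) * S)) := by rw [hee]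
        _ = (CU * opNorm A * Cθ * ((steps α m / steps β m) * u m)) *
            ∑ k ∈ Finset.Icc (n0+1) m,
              steps α k * Real.exp (-(q1/2) * ∑ j ∈ Finset.Icc (k+1) m, steps α j) := by
            rw [Finset.mul_sum]
        _ ≤ (CU * opNorm A * Cθ * ((steps α m / steps β m) * u m)) *
            (2 * Real.exp (q1/2) / q1) := by
            apply mul_le_mul_of_nonneg_left
              (exp_sum_le (steps α) hsα hα1 hq1pos (n0+1) m)
            exact mul_nonneg (mul_nonneg (mul_nonneg hCU0 (opNorm_nonneg A)) hCθ0)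
              (mul_nonneg (div_pos (hsα m) (hsβ m)).le (hupos m).le)
        _ = CU * opNorm A * Cθ * ((steps α m / steps β m) * u m) *
            (2 * Real.exp (q1/2) / q1) := by ring
    -- combine
    have hsplit : ‖θ (m+1) - θstar‖
        ≤ ‖app (Mprod X (steps α) n0 m) (θ n0 - θstar)‖
          + ‖(steps α m / steps β m) •
              app (Mprod X (steps α) (m+1) m) (app A (w (m+1) - wstar))‖
          + ‖(steps α n0 / steps β n0) •
              app (Mprod X (steps α) (n0+1) m) (app A (w n0 - wstar))‖
          + ‖∑ k ∈ Finset.Icc (n0+1) m,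
              ((steps α k / steps β k) • app (Mprod X (steps α) (k+1) m) (app A (w k - wstar))
                - (steps α (k-1) / steps β (k-1)) •
                    app (Mprod X (steps α) (k-1+1) m) (app A (w k - wstar)))‖
          + ‖∑ k ∈ Finset.Icc n0 m, steps α k •
              app (Mprod X (steps α) (k+1) m) (M1 (k+1) - app A (M2 (k+1)))‖ := by
      rw [hiden]
      set a1 := app (Mprod X (steps α) n0 m) (θ n0 - θstar)
      set a2 := (steps α m / steps β m) •
        app (Mprod X (steps α) (m+1) m) (app A (w (m+1) - wstar))
      set a3 := (steps α n0 / steps β n0) •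
        app (Mprod X (steps α) (n0+1) m) (app A (w n0 - wstar))
      set a4 := ∑ k ∈ Finset.Icc (n0+1) m,
        ((steps α k / steps β k) • app (Mprod X (steps α) (k+1) m) (app A (w k - wstar))
          - (steps α (k-1) / steps β (k-1)) • app (Mprod X (steps α) (k-1+1) m) (app A (w k - wstar)))
      set a5 := ∑ k ∈ Finset.Icc n0 m, steps α k •
        app (Mprod X (steps α) (k+1) m) (M1 (k+1) - app A (M2 (k+1)))
      calc ‖a1 + (a2 - a3 - a4) + a5‖
          ≤ ‖a1 + (a2 - a3 - a4)‖ + ‖a5‖ := norm_add_le _ _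
        _ ≤ ‖a1‖ + ‖a2 - a3 - a4‖ + ‖a5‖ := by
            have := norm_add_le a1 (a2 - a3 - a4); linarith
        _ ≤ ‖a1‖ + (‖a2 - a3‖ + ‖a4‖) + ‖a5‖ := by
            have := norm_sub_le (a2 - a3) a4; linarith
        _ ≤ ‖a1‖ + (‖a2‖ + ‖a3‖ + ‖a4‖) + ‖a5‖ := by
            have := norm_sub_le a2 a3; linarith
        _ = ‖a1‖ + ‖a2‖ + ‖a3‖ + ‖a4‖ + ‖a5‖ := by ring
    have hmaxA : opNorm A ≤ max (opNorm A) 1 := le_max_left _ _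
    have hmax1 : (1:ℝ) ≤ max (opNorm A) 1 := le_max_right _ _
    have hEpos : (0:ℝ) < Real.exp (-q1 * ∑ j ∈ Finset.Icc (n0+1) m, steps α j) :=
      Real.exp_pos _
    have hgroup1 : Cθ * Real.exp (-q1 * ∑ j ∈ Finset.Icc (n0+1) m, steps α j) * ‖θ n0 - θstar‖
        + Cθ * Real.exp (-q1 * ∑ j ∈ Finset.Icc (n0+1) m, steps α j) *
          (opNorm A * ((steps α n0 / steps β n0) * ‖w n0 - wstar‖))
        ≤ Cθ * max (opNorm A) 1 *
          ((‖θ n0 - θstar‖ + steps α n0 / steps β n0 * ‖w n0 - wstar‖) *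
            Real.exp (-q1 * ∑ j ∈ Finset.Icc (n0+1) m, steps α j)) := by
      have h1 : (0:ℝ) ≤ ‖θ n0 - θstar‖ := norm_nonneg _
      have h2 : (0:ℝ) ≤ steps α n0 / steps β n0 * ‖w n0 - wstar‖ :=
        mul_nonneg (div_pos (hsα n0) (hsβ n0)).le (norm_nonneg _)
      nlinarith [mul_nonneg (mul_nonneg (mul_nonneg (sub_nonneg.mpr hmax1) hCθ0) hEpos.le) h1,
        mul_nonneg (mul_nonneg (mul_nonneg (sub_nonneg.mpr hmaxA) hCθ0) hEpos.le) h2]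
    have hgroup2 : opNorm A * (steps α m / steps β m) * u m
        + CU * opNorm A * Cθ * ((steps α m / steps β m) * u m) * (2 * Real.exp (q1/2) / q1)
        = opNorm A * (1 + 2 * Real.exp (q1/2) / q1 * CU * Cθ) *
          (steps α m / steps β m) * u m := by ring
    linarith [hsplit, hB1, hB2, hB3, hB4, hLbound, hgroup1]
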